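/- arXiv:2103.16647 — 5 statements merged into one kernel-verified Lean document; each statement's English description precedes it below -/
import Mathlib

section
/- Let Q ⊆ ℝ^p be a nonempty finite set and Q⁺ = conv(Q) + ℝ^p_{≥0}. A point y* ∈ ℝ^p lies outside Q⁺ if and only if there exists w ∈ ℝ^p with w_i ≥ 0 for all i, ∑_i w_i = 1, and α ∈ ℝ such that wᵀy ≥ α for all y ∈ Q but wᵀy* < α. -/
open Pointwise

theorem outside_iff_separating_hyperplane
    (p : ℕ) (Q : Set (Fin p → ℝ)) (hfin : Q.Finite) (hne : Q.Nonempty)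
    (ystar : Fin p → ℝ) :
    ystar ∉ convexHull ℝ Q + {r : Fin p → ℝ | ∀ i, 0 ≤ r i} ↔
      ∃ (w : Fin p → ℝ) (α : ℝ), (∀ i, 0 ≤ w i) ∧ (∑ i, w i = 1) ∧
        (∀ y ∈ Q, α ≤ ∑ i, w i * y i) ∧ ∑ i, w i * ystar i < α := by
  set C : Set (Fin p → ℝ) := convexHull ℝ Q + {r : Fin p → ℝ | ∀ i, 0 ≤ r i} with hC
  set e : Fin p → (Fin p → ℝ) := fun i j => if i = j then (1 : ℝ) else 0 with he
  constructor
  · intro hout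
    have hPclosed : IsClosed {r : Fin p → ℝ | ∀ i, 0 ≤ r i} := by
      have : {r : Fin p → ℝ | ∀ i, 0 ≤ r i} = Set.univ.pi (fun _ => Set.Ici (0 : ℝ)) := by
        ext x; simp [Set.mem_pi, Pi.le_def]
      rw [this]
      exact isClosed_set_pi fun i _ => isClosed_Ici
    have hclosed : IsClosed C :=
      IsClosed.add_left_of_isCompact hPclosed (hfin.isCompact_convexHull ℝ)
    have hconv : Convex ℝ C := by
      apply Convex.add (convex_convexHull ℝ Q)
      intro x hx y hy a b ha hb _ i
      exact add_nonneg (mul_nonneg ha (hx i)) (mul_nonneg hb (hy i))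
    obtain ⟨f, u, hfu, hub⟩ := geometric_hahn_banach_point_closed hconv hclosed hout
    set w : Fin p → ℝ := fun i => f (e i) with hw
    have hfrep : ∀ y : Fin p → ℝ, f y = ∑ i, w i * y i := by
      intro y
      conv_lhs => rw [pi_eq_sum_univ y, map_sum]
      refine Finset.sum_congr rfl fun i _ => ?_
      rw [map_smul, smul_eq_mul, mul_comm]
    obtain ⟨q0, hq0⟩ := hne
    have hq0C : ∀ q ∈ Q, q ∈ C := by
      intro q hq
      exact ⟨q, subset_convexHull ℝ Q hq, 0, fun i => le_refl 0, by simp⟩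
    have hwpos : ∀ i, 0 ≤ w i := by
      intro i
      by_contra hneg
      push_neg at hneg
      have hmem : ∀ t : ℝ, 0 ≤ t → q0 + t • e i ∈ C := by
        intro t ht
        refine ⟨q0, subset_convexHull ℝ Q hq0, t • e i, ?_, rfl⟩
        intro j
        simp only [Pi.smul_apply, he, smul_eq_mul]
        rcases eq_or_ne i j with h | h
        · simp [h, ht]
        · simp [h]
      set t := (u - f q0) / w i + 1 with htdef
      have ht : 0 ≤ max t 0 := le_max_right _ _
      have hin := hub _ (hmem (max t 0) ht)
      rw [map_add, map_smul, smul_eq_mul] at hin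
      have hle : max t 0 * w i ≤ t * w i := by
        rcases le_or_gt t 0 with h | h
        · simp only [max_eq_right h]
          nlinarith
        · simp [max_eq_left h.le]
      have hfq0 : u < f q0 := hub q0 (hq0C q0 hq0)
      have hlt2 : u < f q0 + t * w i := lt_of_lt_of_le hin (by linarith)
      rw [htdef] at hlt2
      have hwi : w i ≠ 0 := ne_of_lt hneg
      rw [add_one_mul, div_mul_cancel₀ _ hwi] at hlt2
      linarith
    have hsum : 0 < ∑ i, w i := by
      rcases (Finset.sum_nonneg fun i _ => hwpos i).lt_or_eq with h | h
      · exact h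
      exfalso
      have hall : ∀ i, w i = 0 := fun i =>
        (Finset.sum_eq_zero_iff_of_nonneg fun j _ => hwpos j).mp h.symm i (Finset.mem_univ i)
      have hf0 : ∀ y, f y = 0 := by
        intro y; rw [hfrep]; simp [hall]
      have h1 := hub q0 (hq0C q0 hq0)
      rw [hf0] at h1
      rw [hf0] at hfu
      linarith
    set s := ∑ i, w i with hs
    refine ⟨fun i => w i / s, u / s, fun i => div_nonneg (hwpos i) hsum.le, ?_, ?_, ?_⟩
    · rw [← Finset.sum_div, div_self hsum.ne']
    · intro y hy
      have h1 := (hub y (hq0C y hy)).le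
      rw [hfrep] at h1
      have h2 : ∑ i, (fun i => w i / s) i * y i = (∑ i, w i * y i) / s := by
        rw [Finset.sum_div]
        exact Finset.sum_congr rfl fun i _ => by ring
      rw [h2]
      gcongr
    · rw [hfrep] at hfu
      have h2 : ∑ i, (fun i => w i / s) i * ystar i = (∑ i, w i * ystar i) / s := by
        rw [Finset.sum_div]
        exact Finset.sum_congr rfl fun i _ => by ring
      rw [h2]
      exact div_lt_div_of_pos_right hfu hsum
  · rintro ⟨w, α, hw0, hw1, hQ, hlt⟩ hmem
    obtain ⟨c, hc, r, hr, hcr⟩ := hmem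
    have hlin : α ≤ ∑ i, w i * c i := by
      have hsub : convexHull ℝ Q ⊆ {y : Fin p → ℝ | α ≤ ∑ i, w i * y i} := by
        apply convexHull_min hQ
        intro x hx y hy a b ha hb hab
        have hx' : α ≤ ∑ i, w i * x i := hx
        have hy' : α ≤ ∑ i, w i * y i := hy
        show α ≤ ∑ i, w i * (a • x + b • y) i
        have heq : ∑ i, w i * (a • x + b • y) i
            = a * (∑ i, w i * x i) + b * (∑ i, w i * y i) := by
          rw [Finset.mul_sum, Finset.mul_sum, ← Finset.sum_add_distrib]
          refine Finset.sum_congr rfl fun i _ => ?_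
          simp only [Pi.add_apply, Pi.smul_apply, smul_eq_mul]; ring
        rw [heq]
        have hα : α = a * α + b * α := by rw [← add_mul, hab, one_mul]
        calc α = a * α + b * α := hα
          _ ≤ a * (∑ i, w i * x i) + b * (∑ i, w i * y i) :=
            add_le_add (mul_le_mul_of_nonneg_left hx' ha) (mul_le_mul_of_nonneg_left hy' hb)
      exact hsub hc
    have hrpos : 0 ≤ ∑ i, w i * r i :=
      Finset.sum_nonneg fun i _ => mul_nonneg (hw0 i) (hr i)
    have heq2 : ∑ i, w i * ystar i = ∑ i, w i * c i + ∑ i, w i * r i := by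
      rw [← Finset.sum_add_distrib, ← hcr]
      exact Finset.sum_congr rfl fun i _ => by simp only [Pi.add_apply]; ring
    linarith
end

section
/- Completeness of the target-cut oracle: let Q ⊆ ℝ^p be a nonempty finite set with all coordinates of all points strictly positive and y* ∈ ℝ^p. If y* ∉ conv(Q) + ℝ^p_{≥0}, then there exists w ∈ ℝ^p with w_i ≥ 0 for all i such that wᵀy ≥ 1 for all y ∈ Q and wᵀy* < 1. -/
open Pointwise

theorem target_cut_oracle_complete
    (p : ℕ) (Q : Set (Fin p → ℝ)) (hfin : Q.Finite) (hne : Q.Nonempty)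
    (hpos : ∀ y ∈ Q, ∀ i, 0 < y i)
    (ystar : Fin p → ℝ)
    (hout : ystar ∉ convexHull ℝ Q + {r : Fin p → ℝ | ∀ i, 0 ≤ r i}) :
    ∃ w : Fin p → ℝ, (∀ i, 0 ≤ w i) ∧ (∀ y ∈ Q, 1 ≤ ∑ i, w i * y i) ∧
      ∑ i, w i * ystar i < 1 := by
  set K : Set (Fin p → ℝ) := {r : Fin p → ℝ | ∀ i, 0 ≤ r i} with hK
  have hKclosed : IsClosed K := by
    have : K = ⋂ i, {r : Fin p → ℝ | 0 ≤ r i} := by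
      ext r; simp [hK, Set.mem_iInter]
    rw [this]
    exact isClosed_iInter fun i => isClosed_le continuous_const (continuous_apply i)
  have hKconv : Convex ℝ K := by
    intro x hx y hy a b ha hb hab i
    have := hx i; have := hy i
    simp only [Pi.add_apply, Pi.smul_apply, smul_eq_mul]
    positivity
  have hSclosed : IsClosed (convexHull ℝ Q + K) := by
    rw [add_comm]
    exact hKclosed.vadd_right_of_isCompact (hfin.isCompact_convexHull (𝕜 := ℝ))
  have hSconv : Convex ℝ (convexHull ℝ Q + K) := (convex_convexHull ℝ Q).add hKconv
  obtain ⟨f, u, hfu, hub⟩ := geometric_hahn_banach_point_closed hSconv hSclosed hout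
  have hmem : ∀ y ∈ Q, ∀ r ∈ K, y + r ∈ convexHull ℝ Q + K := fun y hy r hr =>
    Set.add_mem_add (subset_convexHull ℝ Q hy) hr
  have hQmem : ∀ y ∈ Q, (y : Fin p → ℝ) ∈ convexHull ℝ Q + K := by
    intro y hy
    have := hmem y hy 0 (fun i => le_refl 0)
    simpa using this
  set w : Fin p → ℝ := fun i => f (Pi.single i (1:ℝ)) with hw
  have hrep : ∀ x : Fin p → ℝ, f x = ∑ i, w i * x i := by
    intro x
    have hx : x = ∑ i, x i • (Pi.single i (1:ℝ) : Fin p → ℝ) := by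
      ext j
      simp [Finset.sum_apply, Pi.single_apply]
    conv_lhs => rw [hx]
    rw [map_sum]
    refine Finset.sum_congr rfl fun i _ => ?_
    rw [map_smul]
    simp [hw, mul_comm]
  obtain ⟨y0, hy0⟩ := id hne
  have hwnn : ∀ i, 0 ≤ w i := by
    intro i
    by_contra hneg
    push_neg at hneg
    set t : ℝ := (u - f y0) / w i + 1 with ht
    have h1 : u - f y0 < 0 := sub_neg.mpr (hub y0 (hQmem y0 hy0))
    have hdiv : 0 ≤ (u - f y0) / w i := by
      rw [← neg_div_neg_eq]
      exact div_nonneg (by linarith) (by linarith)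
    have htpos : 0 ≤ t := by rw [ht]; linarith
    have hmem2 : y0 + t • (Pi.single i (1:ℝ) : Fin p → ℝ) ∈ convexHull ℝ Q + K := by
      apply hmem y0 hy0
      intro j
      simp only [Pi.smul_apply, smul_eq_mul, Pi.single_apply]
      by_cases h : j = i <;> simp [h, htpos]
    have hlt := hub _ hmem2
    rw [map_add, map_smul] at hlt
    have hfy : f (Pi.single i (1:ℝ)) = w i := rfl
    rw [hfy] at hlt
    simp only [smul_eq_mul, ht] at hlt
    have hwi : w i ≠ 0 := ne_of_lt hneg
    have hexp : ((u - f y0) / w i + 1) * w i = (u - f y0) + w i := by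
      field_simp
    rw [hexp] at hlt
    linarith
  have hfinQ : hfin.toFinset.Nonempty := by
    rwa [Set.Finite.toFinset_nonempty]
  obtain ⟨ymin, hyminmem, hymin⟩ := hfin.toFinset.exists_min_image f hfinQ
  rw [Set.Finite.mem_toFinset] at hyminmem
  set m : ℝ := f ymin with hm
  have hum : u < m := hub ymin (hQmem ymin hyminmem)
  have hmpos : 0 < m := by
    by_contra h
    push_neg at h
    have hsum : ∑ i, w i * ymin i ≤ 0 := by rw [← hrep]; exact h
    have hterms : ∀ i ∈ Finset.univ, 0 ≤ w i * ymin i := fun i _ =>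
      mul_nonneg (hwnn i) (hpos ymin hyminmem i).le
    have hge : 0 ≤ ∑ i, w i * ymin i := Finset.sum_nonneg hterms
    have heq : ∑ i, w i * ymin i = 0 := le_antisymm hsum hge
    have hzero := (Finset.sum_eq_zero_iff_of_nonneg hterms).mp heq
    have hw0 : ∀ i, w i = 0 := by
      intro i
      rcases mul_eq_zero.mp (hzero i (Finset.mem_univ i)) with h1 | h2
      · exact h1
      · exact absurd h2 (hpos ymin hyminmem i).ne'
    have hfystar : f ystar = 0 := by rw [hrep]; simp [hw0]
    have hfymin : f ymin = 0 := by rw [hrep]; simp [hw0]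
    rw [hm, hfymin] at hum
    rw [hfystar] at hfu
    linarith
  refine ⟨fun i => w i / m, fun i => div_nonneg (hwnn i) hmpos.le, ?_, ?_⟩
  · intro y hy
    have h1 : m ≤ f y := hymin y (hfin.mem_toFinset.mpr hy)
    have heq : ∑ i, w i / m * y i = f y / m := by
      rw [hrep, Finset.sum_div]
      refine Finset.sum_congr rfl fun i _ => ?_
      ring
    rw [heq, le_div_iff₀ hmpos]
    linarith
  · have h2 : f ystar < m := lt_trans hfu hum
    have heq : ∑ i, w i / m * ystar i = f ystar / m := by
      rw [hrep, Finset.sum_div]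
      refine Finset.sum_congr rfl fun i _ => ?_
      ring
    rw [heq, div_lt_one hmpos]
    exact h2
end

section
/- Facet-supporting extreme weights: let Q ⊆ ℝ^p be a nonempty finite set with strictly positive coordinates, Q⁺ = conv(Q) + ℝ^p_{≥0}, and W = { w ∈ ℝ^p_{≥0} : wᵀy ≥ 1 for all y ∈ Q }. If ŵ is an extreme point of W with ŵ ≠ 0, then the set F = { z ∈ Q⁺ : ŵᵀz = 1 } is a face of Q⁺ of dimension p − 1 (a facet), provided Q⁺ is full-dimensional. -/
open Pointwise Matrix Module

private lemma facet_eps_lemma {ι : Type*} (s : Finset ι) (a b : ι → ℝ)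
    (ha : ∀ i ∈ s, 0 < a i) :
    ∃ ε : ℝ, 0 < ε ∧ ∀ i ∈ s, ε * |b i| ≤ a i := by
  classical
  induction s using Finset.induction_on with
  | empty => exact ⟨1, one_pos, fun i hi => absurd hi (Finset.notMem_empty i)⟩
  | @insert j s hj ih =>
      obtain ⟨ε, hε, hεs⟩ := ih (fun i hi => ha i (Finset.mem_insert_of_mem hi))
      have haj := ha j (Finset.mem_insert_self j s)
      refine ⟨min ε (a j / (|b j| + 1)), lt_min hε (by positivity), ?_⟩
      intro i hi
      rcases Finset.mem_insert.1 hi with rfl | hi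
      · calc min ε (a i / (|b i| + 1)) * |b i| ≤ (a i / (|b i| + 1)) * |b i| :=
            mul_le_mul_of_nonneg_right (min_le_right _ _) (abs_nonneg _)
        _ ≤ a i := by
            rw [div_mul_eq_mul_div, div_le_iff₀ (by positivity)]
            nlinarith [abs_nonneg (b i)]
      · exact le_trans (mul_le_mul_of_nonneg_right (min_le_left _ _) (abs_nonneg _)) (hεs i hi)

private lemma facet_core (p : ℕ) (Q : Set (Fin p → ℝ)) (hfin : Q.Finite)
    (what : Fin p → ℝ) (hnz : what ≠ 0)
    (hwnn : ∀ i, 0 ≤ what i)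
    (hwQ' : ∀ y ∈ Q, 1 ≤ what ⬝ᵥ y)
    (hwext : ∀ ⦃x₁ : Fin p → ℝ⦄,
      x₁ ∈ {w : Fin p → ℝ | (∀ i, 0 ≤ w i) ∧ ∀ y ∈ Q, 1 ≤ ∑ i, w i * y i} →
      ∀ ⦃x₂ : Fin p → ℝ⦄,
        x₂ ∈ {w : Fin p → ℝ | (∀ i, 0 ≤ w i) ∧ ∀ y ∈ Q, 1 ≤ ∑ i, w i * y i} →
          what ∈ openSegment ℝ x₁ x₂ → x₁ = what ∧ x₂ = what)
    (y₀ : Fin p → ℝ)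
    (D : Submodule ℝ (Fin p → ℝ))
    (hSD : ∀ y ∈ Q, what ⬝ᵥ y = 1 → y - y₀ ∈ D)
    (hTD : ∀ i, what i = 0 → Pi.single i 1 ∈ D)
    (hp : 0 < p)
    (hcon : finrank ℝ D < p - 1) : False := by
  classical
  have hUle : finrank ℝ ↥(D ⊔ Submodule.span ℝ {what}) ≤ finrank ℝ D + 1 := by
    have hh1 := Submodule.finrank_sup_add_finrank_inf_eq D (Submodule.span ℝ {what})
    have hh2 : finrank ℝ (Submodule.span ℝ ({what} : Set (Fin p → ℝ))) = 1 :=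
      finrank_span_singleton hnz
    omega
  have hUlt : finrank ℝ ↥(D ⊔ Submodule.span ℝ {what}) < finrank ℝ (Fin p → ℝ) := by
    have hfr : finrank ℝ (Fin p → ℝ) = p := by simp
    rw [hfr]
    omega
  have hUtop : D ⊔ Submodule.span ℝ {what} < ⊤ := Submodule.lt_top_of_finrank_lt_finrank hUlt
  obtain ⟨f, hfne, hfker⟩ := Submodule.exists_dual_map_eq_bot_of_lt_top hUtop inferInstance
  have hfU : ∀ v ∈ D ⊔ Submodule.span ℝ {what}, f v = 0 := by
    intro v hv
    have : f v ∈ (D ⊔ Submodule.span ℝ {what}).map f := Submodule.mem_map_of_mem hv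
    rwa [hfker, Submodule.mem_bot] at this
  set u : Fin p → ℝ := fun i => f (Pi.single i 1) with hu
  have hfdot : ∀ v, f v = u ⬝ᵥ v := by
    intro v
    have : f v = ∑ i, v i * u i := by
      conv_lhs => rw [← Finset.univ_sum_single v]
      rw [map_sum]
      refine Finset.sum_congr rfl fun i _ => ?_
      have hsingle : (Pi.single i (v i) : Fin p → ℝ)
          = (v i) • (Pi.single i (1:ℝ) : Fin p → ℝ) := by
        rw [← Pi.single_smul, smul_eq_mul, mul_one]
      rw [hsingle, f.map_smul, smul_eq_mul]
    rw [this]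
    exact Finset.sum_congr rfl fun i _ => mul_comm _ _
  have hfw : f what = 0 :=
    hfU what (Submodule.mem_sup_right (Submodule.mem_span_singleton_self what))
  have hfD : ∀ v ∈ D, f v = 0 := fun v hv => hfU v (Submodule.mem_sup_left hv)
  set c := u ⬝ᵥ y₀ with hc
  set u' : Fin p → ℝ := u - c • what with hu'
  have hkeyT : ∀ i, what i = 0 → u' i = 0 := by
    intro i h0
    have hui : u i = 0 := hfD _ (hTD i h0)
    simp [hu', h0, hui]
  have hkeyS : ∀ y ∈ Q, what ⬝ᵥ y = 1 → u' ⬝ᵥ y = 0 := by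
    intro y hy h1
    have h2 : u ⬝ᵥ y = c := by
      have := hfD _ (hSD y hy h1)
      rw [hfdot, dotProduct_sub] at this
      rw [hc]; linarith
    rw [hu', sub_dotProduct, smul_dotProduct, h2, smul_eq_mul, h1, mul_one, sub_self]
  have hu'ne : u' ≠ 0 := by
    intro h0
    have hcu : u = c • what := by rwa [hu', sub_eq_zero] at h0
    have hw2 : 0 < what ⬝ᵥ what := by
      obtain ⟨i, hi⟩ := Function.ne_iff.1 hnz
      refine Finset.sum_pos' (fun j _ => mul_self_nonneg _) ⟨i, Finset.mem_univ i, ?_⟩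
      exact mul_self_pos.2 (by simpa using hi)
    have hc0 : c = 0 := by
      have h3 := hfw
      rw [hfdot, hcu, smul_dotProduct, smul_eq_mul] at h3
      exact (mul_eq_zero.1 h3).resolve_right (ne_of_gt hw2)
    rw [hc0, zero_smul] at hcu
    exact hfne (LinearMap.ext fun v => by rw [hfdot, hcu, zero_dotProduct]; simp)
  obtain ⟨ε1, hε1, h1⟩ := facet_eps_lemma (Finset.univ.filter fun i => what i ≠ 0) what u'
    (fun i hi => lt_of_le_of_ne (hwnn i) (Ne.symm (Finset.mem_filter.1 hi).2))
  obtain ⟨ε2, hε2, h2⟩ := facet_eps_lemma (hfin.toFinset.filter fun y => what ⬝ᵥ y ≠ 1)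
    (fun y => what ⬝ᵥ y - 1) (fun y => u' ⬝ᵥ y)
    (fun y hy => by
      obtain ⟨hyQ, hy1⟩ := Finset.mem_filter.1 hy
      rw [hfin.mem_toFinset] at hyQ
      have := hwQ' y hyQ
      show (0:ℝ) < what ⬝ᵥ y - 1
      cases lt_or_eq_of_le this with
      | inl h => linarith
      | inr h => exact absurd h.symm hy1)
  set ε := min ε1 ε2 with hε'
  have hε : 0 < ε := lt_min hε1 hε2
  have hmemW : ∀ s : ℝ, |s| ≤ ε →
      what + s • u' ∈ {w : Fin p → ℝ | (∀ i, 0 ≤ w i) ∧ ∀ y ∈ Q, 1 ≤ ∑ i, w i * y i} := by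
    intro s hs
    constructor
    · intro i
      by_cases h0 : what i = 0
      · simp [h0, hkeyT i h0]
      · have hi := h1 i (Finset.mem_filter.2 ⟨Finset.mem_univ i, h0⟩)
        have habs : |s * u' i| ≤ what i := by
          rw [abs_mul]
          calc |s| * |u' i| ≤ ε1 * |u' i| :=
                mul_le_mul_of_nonneg_right (le_trans hs (min_le_left _ _)) (abs_nonneg _)
          _ ≤ what i := hi
        have := neg_abs_le (s * u' i)
        simp only [Pi.add_apply, Pi.smul_apply, smul_eq_mul]
        linarith
    · intro y hy
      have hdot : (∑ i, (what + s • u') i * y i) = what ⬝ᵥ y + s * (u' ⬝ᵥ y) := by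
        show (what + s • u') ⬝ᵥ y = _
        rw [add_dotProduct, smul_dotProduct, smul_eq_mul]
      by_cases h1y : what ⬝ᵥ y = 1
      · rw [hdot, h1y, hkeyS y hy h1y, mul_zero, add_zero]
      · have hy2 := h2 y (Finset.mem_filter.2 ⟨hfin.mem_toFinset.2 hy, h1y⟩)
        have habs : |s * (u' ⬝ᵥ y)| ≤ what ⬝ᵥ y - 1 := by
          rw [abs_mul]
          calc |s| * |u' ⬝ᵥ y| ≤ ε2 * |u' ⬝ᵥ y| :=
                mul_le_mul_of_nonneg_right (le_trans hs (min_le_right _ _)) (abs_nonneg _)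
          _ ≤ what ⬝ᵥ y - 1 := hy2
        have := neg_abs_le (s * (u' ⬝ᵥ y))
        rw [hdot]
        linarith
  have hWa := hmemW ε (le_of_eq (abs_of_pos hε))
  have hWb := hmemW (-ε) (le_of_eq (by rw [abs_neg, abs_of_pos hε]))
  have hseg : what ∈ openSegment ℝ (what + ε • u') (what + (-ε) • u') := by
    refine ⟨1/2, 1/2, by norm_num, by norm_num, by norm_num, ?_⟩
    module
  have heq := (hwext hWa hWb hseg).1
  have : ε • u' = 0 := by
    have := congrArg (fun v => v - what) heq
    simpa [add_sub_cancel_left] using this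
  rcases smul_eq_zero.1 this with h | h
  · exact absurd h (ne_of_gt hε)
  · exact hu'ne h

theorem extreme_weight_gives_facet
    (p : ℕ) (Q : Set (Fin p → ℝ)) (hfin : Q.Finite) (hne : Q.Nonempty)
    (hpos : ∀ y ∈ Q, ∀ i, 0 < y i)
    (Qplus : Set (Fin p → ℝ))
    (hQplus : Qplus = convexHull ℝ Q + {r : Fin p → ℝ | ∀ i, 0 ≤ r i})
    (hfull : Module.finrank ℝ (affineSpan ℝ Qplus).direction = p)
    (what : Fin p → ℝ)
    (hext : what ∈ Set.extremePoints ℝ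
      {w : Fin p → ℝ | (∀ i, 0 ≤ w i) ∧ ∀ y ∈ Q, 1 ≤ ∑ i, w i * y i})
    (hnz : what ≠ 0) :
    IsExtreme ℝ Qplus {z ∈ Qplus | ∑ i, what i * z i = 1} ∧
      Module.finrank ℝ
        (affineSpan ℝ {z ∈ Qplus | ∑ i, what i * z i = 1}).direction = p - 1 := by
  classical
  rcases Nat.eq_zero_or_pos p with hp0 | hp
  · subst hp0
    exact absurd (funext fun i => i.elim0) hnz
  obtain ⟨hwW, hwext⟩ := hext
  obtain ⟨hwnn, hwQ⟩ := hwW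
  have hwQ' : ∀ y ∈ Q, 1 ≤ what ⬝ᵥ y := hwQ
  -- every point of Qplus has dot ≥ 1
  have hQle : ∀ z ∈ Qplus, 1 ≤ what ⬝ᵥ z := by
    intro z hz
    rw [hQplus, Set.mem_add] at hz
    obtain ⟨c, hc, r, hr, rfl⟩ := hz
    have hlin : IsLinearMap ℝ (fun v : Fin p → ℝ => what ⬝ᵥ v) :=
      ⟨fun a b => dotProduct_add _ _ _, fun c a => by simp [dotProduct_smul]⟩
    have hc1 : 1 ≤ what ⬝ᵥ c :=
      convexHull_min (show Q ⊆ {v | 1 ≤ what ⬝ᵥ v} from fun y hy => hwQ' y hy)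
        (convex_halfSpace_ge hlin 1) hc
    have hr0 : 0 ≤ what ⬝ᵥ r :=
      Finset.sum_nonneg fun i _ => mul_nonneg (hwnn i) (hr i)
    rw [dotProduct_add]; linarith
  -- Q is contained in Qplus
  have hQsub : Q ⊆ Qplus := by
    intro y hy
    rw [hQplus]
    have h0 : (0 : Fin p → ℝ) ∈ {r : Fin p → ℝ | ∀ i, 0 ≤ r i} := fun i => le_refl 0
    simpa using Set.add_mem_add (subset_convexHull ℝ Q hy) h0
  -- minimum over Q is attained and equals 1
  obtain ⟨y₀, hy₀Q', hy₀min'⟩ := hfin.toFinset.exists_min_image (fun y => what ⬝ᵥ y)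
    (hfin.toFinset_nonempty.2 hne)
  rw [hfin.mem_toFinset] at hy₀Q'
  have hy₀min : ∀ y ∈ Q, what ⬝ᵥ y₀ ≤ what ⬝ᵥ y := fun y hy =>
    hy₀min' y (hfin.mem_toFinset.2 hy)
  have hy₀1 : what ⬝ᵥ y₀ = 1 := by
    by_contra hne1
    have hm : 1 < what ⬝ᵥ y₀ := lt_of_le_of_ne (hwQ' y₀ hy₀Q') (Ne.symm hne1)
    set m := what ⬝ᵥ y₀ with hmdef
    have hm0 : (0:ℝ) < m := by linarith
    have hminv : m⁻¹ < 1 := by rw [inv_lt_one_iff₀]; right; exact hm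
    have hw1 : m⁻¹ • what ∈
        {w : Fin p → ℝ | (∀ i, 0 ≤ w i) ∧ ∀ y ∈ Q, 1 ≤ ∑ i, w i * y i} := by
      constructor
      · intro i; exact mul_nonneg (by positivity) (hwnn i)
      · intro y hy
        have hdot : (m⁻¹ • what) ⬝ᵥ y = m⁻¹ * (what ⬝ᵥ y) := by simp [smul_dotProduct]
        rw [show (∑ i, (m⁻¹ • what) i * y i) = (m⁻¹ • what) ⬝ᵥ y from rfl, hdot,
          one_le_inv_mul₀ hm0]
        exact hy₀min y hy
    have hw2 : (2 - m⁻¹) • what ∈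
        {w : Fin p → ℝ | (∀ i, 0 ≤ w i) ∧ ∀ y ∈ Q, 1 ≤ ∑ i, w i * y i} := by
      constructor
      · intro i; exact mul_nonneg (by linarith) (hwnn i)
      · intro y hy
        have hdot : ((2 - m⁻¹) • what) ⬝ᵥ y = (2 - m⁻¹) * (what ⬝ᵥ y) := by
          simp [smul_dotProduct]
        rw [show (∑ i, ((2 - m⁻¹) • what) i * y i) = ((2 - m⁻¹) • what) ⬝ᵥ y from rfl, hdot]
        have := hwQ' y hy
        nlinarith
    have hseg : what ∈ openSegment ℝ (m⁻¹ • what) ((2 - m⁻¹) • what) := by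
      refine ⟨1/2, 1/2, by norm_num, by norm_num, by norm_num, ?_⟩
      rw [smul_smul, smul_smul, ← add_smul]
      rw [show (1/2 * m⁻¹ + 1/2 * (2 - m⁻¹) : ℝ) = 1 by ring, one_smul]
    have heq := hwext hw1 hw2 hseg
    have h2 : (m⁻¹ - 1) • what = 0 := by
      rw [sub_smul, one_smul, heq, sub_self]
    rcases smul_eq_zero.1 h2 with h | h
    · have : m⁻¹ = 1 := by linarith [sub_eq_zero.1 h]
      linarith
    · exact hnz h
  -- Part 1 : the set is a face
  have hpart1 : IsExtreme ℝ Qplus {z ∈ Qplus | ∑ i, what i * z i = 1} := by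
    constructor
    · exact fun z hz => hz.1
    · rintro x1 hx1 x2 hx2 x ⟨hxQ, hx1'⟩ hseg
      obtain ⟨a, b, ha, hb, hab, rfl⟩ := hseg
      have h1 := hQle x1 hx1
      have h2 := hQle x2 hx2
      have hdot : what ⬝ᵥ (a • x1 + b • x2) = a * (what ⬝ᵥ x1) + b * (what ⬝ᵥ x2) := by
        simp [dotProduct_add, dotProduct_smul]
      have hx1'' : what ⬝ᵥ (a • x1 + b • x2) = 1 := hx1'
      rw [hdot] at hx1''
      have e1 : what ⬝ᵥ x1 = 1 := by nlinarith
      have e2 : what ⬝ᵥ x2 = 1 := by nlinarith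
      exact ⟨hx1, e1⟩
  refine ⟨hpart1, ?_⟩
  -- Part 2 : dimension count
  set F : Set (Fin p → ℝ) := {z ∈ Qplus | ∑ i, what i * z i = 1} with hF
  -- upper bound
  set φ : (Fin p → ℝ) →ₗ[ℝ] ℝ :=
    { toFun := fun v => what ⬝ᵥ v
      map_add' := fun a b => dotProduct_add _ _ _
      map_smul' := fun c a => by simp [dotProduct_smul] } with hφ
  have hφne : φ ≠ 0 := by
    obtain ⟨i, hi⟩ := Function.ne_iff.1 hnz
    intro h
    have := congrArg (fun g => g (Pi.single i 1)) h
    simp [hφ, dotProduct_single] at this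
    exact hi (by simpa using this)
  have hker : finrank ℝ (LinearMap.ker φ) = p - 1 := by
    have hrn := LinearMap.finrank_range_add_finrank_ker φ
    have hr1 : finrank ℝ (LinearMap.range φ) = 1 := by
      have hle : finrank ℝ (LinearMap.range φ) ≤ 1 := by
        simpa using Submodule.finrank_le (LinearMap.range φ)
      have hne' : LinearMap.range φ ≠ ⊥ := fun h => hφne (LinearMap.range_eq_bot.1 h)
      have : finrank ℝ (LinearMap.range φ) ≠ 0 := fun h => hne' (Submodule.finrank_eq_zero.1 h)
      omega
    rw [hr1] at hrn
    have hfr : finrank ℝ (Fin p → ℝ) = p := by simp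
    omega
  have hDker : (affineSpan ℝ F).direction ≤ LinearMap.ker φ := by
    rw [direction_affineSpan, vectorSpan_def]
    rw [Submodule.span_le]
    rintro v hv
    rw [Set.mem_vsub] at hv
    obtain ⟨x, hx, y, hy, rfl⟩ := hv
    have hx1 : what ⬝ᵥ x = 1 := hx.2
    have hy1 : what ⬝ᵥ y = 1 := hy.2
    simp only [SetLike.mem_coe, LinearMap.mem_ker]
    show what ⬝ᵥ (x - y) = 0
    rw [dotProduct_sub, hx1, hy1, sub_self]
  have hup : finrank ℝ (affineSpan ℝ F).direction ≤ p - 1 := by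
    rw [← hker]
    exact Submodule.finrank_mono hDker
  -- lower bound via facet_core
  have hy₀F : y₀ ∈ F := ⟨hQsub hy₀Q', hy₀1⟩
  have hSD : ∀ y ∈ Q, what ⬝ᵥ y = 1 → y - y₀ ∈ (affineSpan ℝ F).direction := by
    intro y hy h1
    exact AffineSubspace.vsub_mem_direction
      (subset_affineSpan ℝ F ⟨hQsub hy, h1⟩) (subset_affineSpan ℝ F hy₀F)
  have hTD : ∀ i, what i = 0 → (Pi.single i 1 : Fin p → ℝ) ∈ (affineSpan ℝ F).direction := by
    intro i h0
    have hmem : y₀ + Pi.single i 1 ∈ F := by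
      constructor
      · rw [hQplus]
        have hsnn : (Pi.single i 1 : Fin p → ℝ) ∈ {r : Fin p → ℝ | ∀ j, 0 ≤ r j} := by
          intro j
          rcases eq_or_ne j i with rfl | hji
          · simp
          · simp [Pi.single_apply, hji]
        exact Set.add_mem_add (subset_convexHull ℝ Q hy₀Q') hsnn
      · show what ⬝ᵥ (y₀ + Pi.single i 1) = 1
        rw [dotProduct_add, hy₀1, dotProduct_single, h0, zero_mul, add_zero]
    have := AffineSubspace.vsub_mem_direction
      (subset_affineSpan ℝ F hmem) (subset_affineSpan ℝ F hy₀F)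
    simpa [vsub_eq_sub, add_sub_cancel_left] using this
  have hlow : ¬ (finrank ℝ (affineSpan ℝ F).direction < p - 1) := fun hcon =>
    facet_core p Q hfin what hnz hwnn hwQ'
      (fun x₁ h₁ x₂ h₂ hs => ⟨hwext h₁ h₂ hs, hwext h₂ h₁ (by rw [openSegment_symm]; exact hs)⟩) y₀ (affineSpan ℝ F).direction hSD hTD hp hcon
  omega
end

section
/- If ŷ ∈ Q is an extreme point of Q⁺ = conv(Q) + ℝ^p_{≥0} for a nonempty finite Q ⊆ ℝ^p, then ŷ is a nondominated point of Q. -/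
open Pointwise

theorem extreme_point_is_nondominated
    (p : ℕ) (Q : Set (Fin p → ℝ)) (hfin : Q.Finite) (hne : Q.Nonempty)
    (yhat : Fin p → ℝ) (hyQ : yhat ∈ Q)
    (hext : yhat ∈ (convexHull ℝ Q + {r : Fin p → ℝ | ∀ i, 0 ≤ r i}).extremePoints ℝ) :
    ¬ ∃ y ∈ Q, (∀ i, y i ≤ yhat i) ∧ y ≠ yhat := by
  rintro ⟨y, hyQ', hle, hne'⟩
  obtain ⟨hmem, hext'⟩ := hext
  set r : Fin p → ℝ := yhat - y with hr
  have hr0 : ∀ i, 0 ≤ r i := fun i => by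
    simp only [hr, Pi.sub_apply, sub_nonneg]; exact hle i
  have hy1 : y ∈ convexHull ℝ Q + {r : Fin p → ℝ | ∀ i, 0 ≤ r i} :=
    ⟨y, subset_convexHull ℝ Q hyQ', 0, fun i => le_rfl, by simp⟩
  have hy2 : y + (2 : ℝ) • r ∈ convexHull ℝ Q + {r : Fin p → ℝ | ∀ i, 0 ≤ r i} :=
    ⟨y, subset_convexHull ℝ Q hyQ', (2 : ℝ) • r, fun i => by
      simpa using mul_nonneg (by norm_num : (0:ℝ) ≤ 2) (hr0 i), rfl⟩
  have hseg : yhat ∈ openSegment ℝ y (y + (2 : ℝ) • r) := by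
    refine ⟨1/2, 1/2, by norm_num, by norm_num, by norm_num, ?_⟩
    funext i
    simp only [hr, Pi.add_apply, Pi.smul_apply, Pi.sub_apply, smul_eq_mul]
    ring
  have := hext' hy1 hy2 hseg
  exact hne' this
end

section
/- Separation objective sign test: let Q ⊆ ℝ^p be a nonempty finite set, Q⁺ = conv(Q) + ℝ^p_{≥0}, y* ∈ ℝ^p, and define v = min{ (y*)ᵀw − α : w ∈ ℝ^p_{≥0}, ∑_i w_i = 1, α ∈ ℝ, wᵀy ≥ α for all y ∈ Q, α = min_{y∈Q} wᵀy }. Then v ≥ 0 if and only if y* ∈ Q⁺. -/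
open Pointwise

theorem separation_objective_sign_test
    (p : ℕ) (Q : Set (Fin p → ℝ)) (hfin : Q.Finite) (hne : Q.Nonempty)
    (ystar : Fin p → ℝ) (v : ℝ)
    (hv : IsLeast
      {s : ℝ | ∃ (w : Fin p → ℝ) (α : ℝ), (∀ i, 0 ≤ w i) ∧ (∑ i, w i = 1) ∧
        (∀ y ∈ Q, α ≤ ∑ i, w i * y i) ∧
        IsLeast ((fun y => ∑ i, w i * y i) '' Q) α ∧
        s = (∑ i, ystar i * w i) - α} v) :
    0 ≤ v ↔ ystar ∈ convexHull ℝ Q + {r : Fin p → ℝ | ∀ i, 0 ≤ r i} := by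
  obtain ⟨hvmem, hlb⟩ := hv
  constructor
  · intro h0
    by_contra hmem
    set K : Set (Fin p → ℝ) := {r | ∀ i, 0 ≤ r i} with hK
    have hKc : Convex ℝ K := by
      intro x hx y hy a b ha hb hab i
      have h1 := hx i; have h2 := hy i
      have : (0:ℝ) ≤ a * x i + b * y i := by positivity
      simpa using this
    have hKcl : IsClosed K := by
      have hKeq : K = Set.pi Set.univ (fun _ => Set.Ici (0:ℝ)) := by
        ext x; simp [hK, Set.mem_pi, Pi.le_def]
      rw [hKeq]; exact isClosed_set_pi fun i _ => isClosed_Ici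
    have hScl : IsClosed (convexHull ℝ Q + K) :=
      hKcl.add_left_of_isCompact (hfin.isCompact_convexHull (𝕜 := ℝ))
    have hSconv : Convex ℝ (convexHull ℝ Q + K) := (convex_convexHull ℝ Q).add hKc
    obtain ⟨f, u, hfu, hub⟩ := geometric_hahn_banach_point_closed hSconv hScl hmem
    set c : Fin p → ℝ := fun i => f (Pi.single i 1) with hc
    have hfeq : ∀ x : Fin p → ℝ, f x = ∑ i, c i * x i := by
      intro x
      have hx : x = ∑ i, x i • (Pi.single i 1 : Fin p → ℝ) := by
        ext j
        rw [Finset.sum_apply]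
        simp [Pi.single_apply]
      conv_lhs => rw [hx]
      rw [map_sum]
      simp [hc, mul_comm]
    obtain ⟨z, hzQ⟩ := hne
    have hzC : z ∈ convexHull ℝ Q := subset_convexHull ℝ Q hzQ
    have hzS : ∀ r ∈ K, z + r ∈ convexHull ℝ Q + K := fun r hr => Set.add_mem_add hzC hr
    have hc0 : ∀ i, 0 ≤ c i := by
      intro i
      by_contra hci
      push_neg at hci
      have hfz : u < f z := by
        have : z + 0 ∈ convexHull ℝ Q + K := hzS 0 (fun j => le_refl 0)
        simpa using hub _ this
      set t : ℝ := (u - f z) / c i with ht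
      have htpos : 0 ≤ t := by
        rw [ht]
        exact div_nonneg_iff.2 (Or.inr ⟨by linarith, by linarith⟩)
      have hmemK : t • (Pi.single i 1 : Fin p → ℝ) ∈ K := by
        intro j
        simp only [Pi.smul_apply, Pi.single_apply, smul_eq_mul]
        by_cases h : j = i <;> simp [h, htpos]
      have hb := hub _ (hzS _ hmemK)
      rw [map_add, map_smul, smul_eq_mul] at hb
      have hb' : u < f z + t * c i := hb
      have : t * c i = u - f z := div_mul_cancel₀ _ (by linarith : c i ≠ 0)
      rw [this] at hb'
      linarith
    set S : ℝ := ∑ i, c i with hS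
    have hS0 : 0 ≤ S := Finset.sum_nonneg fun i _ => hc0 i
    have hSpos : 0 < S := by
      rcases hS0.lt_or_eq with h | h
      · exact h
      · exfalso
        have hall : ∀ i ∈ Finset.univ, c i = 0 := by
          intro i _
          have := (Finset.sum_eq_zero_iff_of_nonneg (fun i _ => hc0 i)).1 h.symm
          exact this i (Finset.mem_univ i)
        have hf0 : ∀ x, f x = 0 := by
          intro x
          rw [hfeq x]
          exact Finset.sum_eq_zero fun i _ => by rw [hall i (Finset.mem_univ i), zero_mul]
        have hfz : u < f z := by
          have : z + 0 ∈ convexHull ℝ Q + K := hzS 0 (fun j => le_refl 0)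
          simpa using hub _ this
        rw [hf0] at hfu hfz
        linarith
    set w : Fin p → ℝ := fun i => c i / S with hw
    have hw0 : ∀ i, 0 ≤ w i := fun i => div_nonneg (hc0 i) hS0
    have hw1 : ∑ i, w i = 1 := by
      rw [hw]
      simp only
      rw [← Finset.sum_div, ← hS, div_self hSpos.ne']
    obtain ⟨α, hα⟩ := (hfin.image (fun y => ∑ i, w i * y i)).isCompact.exists_isLeast
      (Set.Nonempty.image _ ⟨z, hzQ⟩)
    have hαlb : ∀ y ∈ Q, α ≤ ∑ i, w i * y i := fun y hy =>
      hα.2 (Set.mem_image_of_mem _ hy)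
    have hsmem : (∑ i, ystar i * w i) - α ∈
        {s : ℝ | ∃ (w : Fin p → ℝ) (α : ℝ), (∀ i, 0 ≤ w i) ∧ (∑ i, w i = 1) ∧
          (∀ y ∈ Q, α ≤ ∑ i, w i * y i) ∧
          IsLeast ((fun y => ∑ i, w i * y i) '' Q) α ∧
          s = (∑ i, ystar i * w i) - α} :=
      ⟨w, α, hw0, hw1, hαlb, hα, rfl⟩
    have hvle := hlb hsmem
    -- show the objective value is negative
    obtain ⟨y0, hy0Q, hy0⟩ := hα.1
    have hy0S : u < f y0 := by
      have : y0 + 0 ∈ convexHull ℝ Q + K :=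
        Set.add_mem_add (subset_convexHull ℝ Q hy0Q) (fun j => le_refl 0)
      simpa using hub _ this
    have hfy0 : f y0 = S * α := by
      rw [hfeq, ← hy0, Finset.mul_sum]
      apply Finset.sum_congr rfl
      intro i _
      rw [hw]
      field_simp
    have hfystar : f ystar = S * ∑ i, ystar i * w i := by
      rw [hfeq, Finset.mul_sum]
      apply Finset.sum_congr rfl
      intro i _
      rw [hw]
      field_simp
    have hlt : S * ∑ i, ystar i * w i < S * α := by
      rw [← hfystar, ← hfy0]; linarith
    have : (∑ i, ystar i * w i) < α := lt_of_mul_lt_mul_left hlt hS0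
    linarith
  · rintro ⟨z, hz, r, hr, rfl⟩
    obtain ⟨w, α, hw0, hw1, hQα, hleast, hs⟩ := hvmem
    have hzα : α ≤ ∑ i, w i * z i := by
      have hlin : IsLinearMap ℝ (fun y : Fin p → ℝ => ∑ i, w i * y i) := by
        constructor
        · intro a b
          rw [← Finset.sum_add_distrib]
          exact Finset.sum_congr rfl fun i _ => by simp [mul_add]
        · intro cc a
          simp only [Pi.smul_apply, smul_eq_mul, Finset.mul_sum]
          exact Finset.sum_congr rfl fun i _ => by ring
      have hsub : convexHull ℝ Q ⊆ {y | α ≤ ∑ i, w i * y i} :=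
        convexHull_min hQα (convex_halfSpace_ge hlin α)
      exact hsub hz
    have hrw : 0 ≤ ∑ i, w i * r i := Finset.sum_nonneg fun i _ =>
      mul_nonneg (hw0 i) (hr i)
    have hsum : ∑ i, (z + r) i * w i = (∑ i, w i * z i) + ∑ i, w i * r i := by
      rw [← Finset.sum_add_distrib]
      exact Finset.sum_congr rfl fun i _ => by simp [Pi.add_apply]; ring
    rw [hs, hsum]
    linarith
end
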